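/- If f(z) = Σ_{k=0}^∞ a_k z^k is holomorphic on the unit disk with |f| ≤ 1, then the coefficients satisfy Wiener's inequality: |a_k| ≤ 1 − |a_0|² for every k ≥ 1. -/

import Mathlib

open Metric Set Finset

private lemma mobius_bound (c w : ℂ) (hc : ‖c‖ ≤ 1) (hw : ‖w‖ ≤ 1) :
    ‖c - w‖ ≤ ‖1 - (starRingEnd ℂ) c * w‖ := by
  have hc' : ‖c‖ ≤ 1 := hc
  have hw' : ‖w‖ ≤ 1 := hw
  have h1 : Complex.normSq (c - w) ≤ Complex.normSq (1 - (starRingEnd ℂ) c * w) := by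
    have e1 : Complex.normSq (c - w)
        = Complex.normSq c + Complex.normSq w - 2 * (c * (starRingEnd ℂ) w).re :=
      Complex.normSq_sub c w
    have e2 : Complex.normSq (1 - (starRingEnd ℂ) c * w)
        = 1 + Complex.normSq c * Complex.normSq w - 2 * (c * (starRingEnd ℂ) w).re := by
      rw [Complex.normSq_sub]
      simp [Complex.normSq_mul, Complex.normSq_conj, map_mul, Complex.conj_conj]
    have hcs : Complex.normSq c ≤ 1 := by
      nlinarith [Complex.sq_norm c, norm_nonneg c]
    have hws : Complex.normSq w ≤ 1 := by
      nlinarith [Complex.sq_norm w, norm_nonneg w]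
    nlinarith
  rw [Complex.norm_def, Complex.norm_def]
  exact Real.sqrt_le_sqrt h1

private lemma key_wiener (g : ℂ → ℂ) (b : ℕ → ℂ)
    (hg : ∀ z : ℂ, ‖z‖ < 1 → HasSum (fun n : ℕ => b n * z ^ n) (g z))
    (hbd : ∀ z : ℂ, ‖z‖ < 1 → ‖g z‖ ≤ 1) :
    ‖b 1‖ ≤ 1 - ‖b 0‖ ^ 2 := by
  set p : FormalMultilinearSeries ℂ ℂ ℂ := FormalMultilinearSeries.ofScalars ℂ b with hp
  have hrad : 1 ≤ p.radius := by
    apply ENNReal.le_of_forall_nnreal_lt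
    intro r hr
    have hr1 : (r : ℝ) < 1 := by exact_mod_cast hr
    have hz : ‖((r : ℝ) : ℂ)‖ < 1 := by
      simpa [abs_of_nonneg r.2] using hr1
    have hs : Summable fun n => ‖b n * ((r : ℝ) : ℂ) ^ n‖ :=
      summable_norm_iff.2 (hg _ hz).summable
    apply p.le_radius_of_summable_norm
    refine hs.congr fun n => ?_
    rw [hp, FormalMultilinearSeries.ofScalars_norm]
    simp [norm_mul, norm_pow, abs_of_nonneg r.2]
  have hps : HasFPowerSeriesOnBall g p 0 1 := by
    refine ⟨hrad, one_pos, fun {y} hy => ?_⟩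
    have hy' : ‖y‖ < 1 := by
      rw [mem_emetric_ball_zero_iff, ← ofReal_norm_eq_enorm, ENNReal.ofReal_lt_one] at hy
      exact hy
    have hfun : (fun n => p n fun _ => y) = fun n => b n * y ^ n := by
      funext n
      rw [hp, FormalMultilinearSeries.ofScalars_apply_eq, smul_eq_mul]
    rw [hfun, zero_add]
    exact hg y hy'
  have hg0 : g 0 = b 0 := by
    have h1 : HasSum (fun n => b n * (0 : ℂ) ^ n) (b 0 * (0 : ℂ) ^ 0) :=
      hasSum_single 0 (fun n hn => by simp [zero_pow hn])
    have := h1.unique (hg 0 (by norm_num))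
    simpa using this.symm
  have hderiv : deriv g 0 = b 1 := by
    rw [hps.hasFPowerSeriesAt.deriv, hp]
    rw [show (fun _ : Fin 1 => (1 : ℂ)) = fun _ => (1 : ℂ) from rfl,
      FormalMultilinearSeries.ofScalars_apply_eq]
    simp
  have hdiff : DifferentiableOn ℂ g (ball (0 : ℂ) 1) := by
    have := hps.differentiableOn
    rwa [show (1 : ENNReal) = ((1 : NNReal) : ENNReal) by simp,
      Metric.emetric_ball_nnreal] at this
  have hb0 : ‖b 0‖ ≤ 1 := hg0 ▸ hbd 0 (by norm_num)
  rcases lt_or_eq_of_le hb0 with hb0lt | hb0eq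
  · -- nondegenerate case
    set c := b 0 with hc
    set ω : ℂ → ℂ := fun z => (c - g z) / (1 - (starRingEnd ℂ) c * g z) with hω
    have hden : ∀ z ∈ ball (0 : ℂ) 1, 1 - (starRingEnd ℂ) c * g z ≠ 0 := by
      intro z hz
      have h1 : ‖(starRingEnd ℂ) c * g z‖ < 1 := by
        rw [norm_mul, RCLike.norm_conj]
        calc ‖c‖ * ‖g z‖ ≤ ‖c‖ * 1 :=
              mul_le_mul_of_nonneg_left (hbd z (by simpa using hz)) (norm_nonneg _)
          _ < 1 := by simpa using hb0lt
      intro h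
      have h2 : (starRingEnd ℂ) c * g z = 1 := by linear_combination -h
      rw [h2] at h1; simp at h1
    have hωdiff : DifferentiableOn ℂ ω (ball (0 : ℂ) 1) := by
      apply DifferentiableOn.div
      · exact (differentiableOn_const c).sub hdiff
      · exact (differentiableOn_const 1).sub ((differentiableOn_const _).mul hdiff)
      · exact hden
    have hωbd : ∀ z ∈ ball (0 : ℂ) 1, ‖ω z‖ ≤ 1 := by
      intro z hz
      rw [hω]
      simp only [norm_div]
      rw [div_le_one (norm_pos_iff.2 (hden z hz))]
      exact mobius_bound c (g z) hb0 (hbd z (by simpa using hz))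
    have hω0 : ω 0 = 0 := by rw [hω]; simp [hg0]
    have hd2 : ‖deriv ω 0‖ ≤ 1 := by
      apply le_of_forall_pos_le_add
      intro ε hε
      have hmaps : MapsTo ω (ball (0 : ℂ) 1) (ball (ω 0) (1 + ε)) := by
        intro z hz
        rw [mem_ball, hω0, dist_eq_norm, sub_zero]
        calc ‖ω z‖ ≤ 1 := hωbd z hz
          _ < 1 + ε := by linarith
      have := Complex.norm_deriv_le_div_of_mapsTo_ball hωdiff (hmaps.mono_right ball_subset_closedBall) one_pos
      simpa using this
    -- compute deriv ω 0
    have hgd : HasDerivAt g (b 1) 0 := by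
      have h := (hps.analyticAt.differentiableAt).hasDerivAt
      rwa [hderiv] at h
    have hnum : HasDerivAt (fun z => c - g z) (-(b 1)) 0 := hgd.const_sub c
    have hdend : HasDerivAt (fun z => 1 - (starRingEnd ℂ) c * g z)
        (-((starRingEnd ℂ) c * b 1)) 0 := (hgd.const_mul _).const_sub 1
    have hden0 : (1 - (starRingEnd ℂ) c * g 0) ≠ 0 := hden 0 (by simp)
    have hωd : deriv ω 0 = _ := (hnum.div hdend hden0).deriv
    have hX : (1 : ℂ) - (starRingEnd ℂ) c * c = ((1 - ‖b 0‖ ^ 2 : ℝ) : ℂ) := by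
      rw [mul_comm, Complex.mul_conj, ← hc]
      rw [Complex.normSq_eq_norm_sq]
      push_cast
      ring
    have hpos : (0 : ℝ) < 1 - ‖b 0‖ ^ 2 := by nlinarith [norm_nonneg (b 0)]
    have hXne : ((1 - ‖b 0‖ ^ 2 : ℝ) : ℂ) ≠ 0 := Complex.ofReal_ne_zero.2 hpos.ne'
    have e2 : deriv ω 0 = -(b 1) / ((1 - ‖b 0‖ ^ 2 : ℝ) : ℂ) := by
      rw [hωd, hg0, sub_self, zero_mul, sub_zero, hX,
        show ((1 - ‖b 0‖ ^ 2 : ℝ) : ℂ) ^ 2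
          = ((1 - ‖b 0‖ ^ 2 : ℝ) : ℂ) * ((1 - ‖b 0‖ ^ 2 : ℝ) : ℂ) from sq _]
      exact mul_div_mul_right _ _ hXne
    rw [e2] at hd2
    rw [norm_div, norm_neg, Complex.norm_real, Real.norm_eq_abs,
      abs_of_pos hpos, div_le_one hpos] at hd2
    exact hd2
  · -- degenerate case: |b 0| = 1
    have hmax : IsMaxOn (norm ∘ g) (ball (0 : ℂ) 1) 0 := by
      intro z hz
      simp only [Function.comp_apply, mem_setOf_eq]
      calc ‖g z‖ ≤ 1 := hbd z (by simpa using hz)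
        _ = ‖g 0‖ := by rw [hg0, ← hb0eq]
    have heq := Complex.eqOn_of_isPreconnected_of_isMaxOn_norm
      (convex_ball (0 : ℂ) 1).isPreconnected isOpen_ball hdiff
      (mem_ball_self one_pos) hmax
    have hev : g =ᶠ[nhds (0 : ℂ)] Function.const ℂ (g 0) :=
      Filter.eventuallyEq_of_mem (isOpen_ball.mem_nhds (mem_ball_self one_pos)) heq
    have hd0 : deriv g 0 = 0 := by
      rw [hev.deriv_eq]
      exact deriv_const _ _
    have hb1 : b 1 = 0 := by rw [← hderiv, hd0]
    rw [hb1, hb0eq]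
    simp

/-- Wiener's inequality for coefficients of self-maps of the disk. -/
theorem wiener_inequality (f : ℂ → ℂ) (a : ℕ → ℂ)
    (hf : ∀ z : ℂ, ‖z‖ < 1 → HasSum (fun k : ℕ => a k * z ^ k) (f z))
    (hb : ∀ z : ℂ, ‖z‖ < 1 → ‖f z‖ ≤ 1)
    (k : ℕ) (hk : 1 ≤ k) :
    ‖a k‖ ≤ 1 - ‖a 0‖ ^ 2 := by
  have hk0 : k ≠ 0 := by omega
  set ζ : ℂ := Complex.exp (2 * Real.pi * Complex.I / k) with hζdef
  have hζ : IsPrimitiveRoot ζ k := Complex.isPrimitiveRoot_exp k hk0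
  have hζk : ζ ^ k = 1 := hζ.pow_eq_one
  have hζnorm : ‖ζ‖ = 1 := by
    have h1 : ‖ζ‖ ^ k = 1 := by rw [← norm_pow, hζk, norm_one]
    by_contra hne
    rcases lt_or_gt_of_ne hne with h | h
    · have h2 : ‖ζ‖ ^ k < 1 := pow_lt_one₀ (norm_nonneg _) h hk0
      rw [h1] at h2; exact lt_irrefl 1 h2
    · have h2 : 1 < ‖ζ‖ ^ k := one_lt_pow₀ h hk0
      rw [h1] at h2; exact lt_irrefl 1 h2
  have hzj : ∀ (z : ℂ) (j : ℕ), ‖z‖ < 1 → ‖ζ ^ j * z‖ < 1 := by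
    intro z j hz
    rw [norm_mul, norm_pow, hζnorm, one_pow, one_mul]
    exact hz
  have main : ∀ z : ℂ, ‖z‖ < 1 → HasSum (fun m : ℕ => a (k * m) * (z ^ k) ^ m)
      ((k : ℂ)⁻¹ * ∑ j ∈ Finset.range k, f (ζ ^ j * z)) := by
    intro z hz
    have h1 : HasSum (fun n : ℕ => ∑ j ∈ Finset.range k, a n * (ζ ^ j * z) ^ n)
        (∑ j ∈ Finset.range k, f (ζ ^ j * z)) :=
      hasSum_sum (fun j _ => hf (ζ ^ j * z) (hzj z j hz))
    have h2 := h1.mul_left (k : ℂ)⁻¹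
    have hkc : ((k : ℂ)) ≠ 0 := Nat.cast_ne_zero.2 hk0
    have h3 : (fun n : ℕ => (k : ℂ)⁻¹ * ∑ j ∈ Finset.range k, a n * (ζ ^ j * z) ^ n)
        = fun n : ℕ => if k ∣ n then a n * z ^ n else 0 := by
      funext n
      have hsum : ∑ j ∈ Finset.range k, (ζ ^ n) ^ j = if k ∣ n then (k : ℂ) else 0 := by
        by_cases hdvd : k ∣ n
        · rw [if_pos hdvd]
          have h4 : ζ ^ n = 1 := (hζ.pow_eq_one_iff_dvd n).2 hdvd
          simp [h4]
        · rw [if_neg hdvd]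
          have hne : ζ ^ n ≠ 1 := fun h => hdvd ((hζ.pow_eq_one_iff_dvd n).1 h)
          rw [geom_sum_eq hne]
          have h5 : (ζ ^ n) ^ k = 1 := by
            rw [← pow_mul, mul_comm, pow_mul, hζk, one_pow]
          rw [h5]; simp
      have hterm : ∑ j ∈ Finset.range k, a n * (ζ ^ j * z) ^ n
          = (a n * z ^ n) * ∑ j ∈ Finset.range k, (ζ ^ n) ^ j := by
        rw [Finset.mul_sum]
        apply Finset.sum_congr rfl
        intro j _
        rw [mul_pow, pow_right_comm]
        ring
      rw [hterm, hsum]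
      by_cases hdvd : k ∣ n
      · rw [if_pos hdvd, if_pos hdvd]
        field_simp
      · rw [if_neg hdvd, if_neg hdvd, mul_zero, mul_zero]
    rw [h3] at h2
    have hinj : Function.Injective (fun m : ℕ => k * m) := fun m m' h =>
      Nat.eq_of_mul_eq_mul_left (by omega) h
    have h4 := (Function.Injective.hasSum_iff hinj ?_).2 h2
    · have h5 : ((fun n : ℕ => if k ∣ n then a n * z ^ n else 0) ∘ (fun m : ℕ => k * m))
          = fun m : ℕ => a (k * m) * (z ^ k) ^ m := by
        funext m
        simp only [Function.comp_apply]
        rw [if_pos (dvd_mul_right k m), pow_mul]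
      rwa [h5] at h4
    · intro x hx
      rw [if_neg]
      intro hdvd
      obtain ⟨m, rfl⟩ := hdvd
      exact hx ⟨m, rfl⟩
  have hbnd : ∀ z : ℂ, ‖z‖ < 1 →
      ‖(k : ℂ)⁻¹ * ∑ j ∈ Finset.range k, f (ζ ^ j * z)‖ ≤ 1 := by
    intro z hz
    rw [norm_mul, norm_inv, Complex.norm_natCast]
    have h1 : ‖∑ j ∈ Finset.range k, f (ζ ^ j * z)‖ ≤ (k : ℝ) := by
      calc ‖∑ j ∈ Finset.range k, f (ζ ^ j * z)‖
          ≤ ∑ j ∈ Finset.range k, ‖f (ζ ^ j * z)‖ := norm_sum_le _ _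
        _ ≤ ∑ _j ∈ Finset.range k, (1 : ℝ) :=
            Finset.sum_le_sum fun j _ => hb _ (hzj z j hz)
        _ = (k : ℝ) := by simp
    have hkpos : (0 : ℝ) < (k : ℝ) := by positivity
    calc ((k : ℝ))⁻¹ * ‖∑ j ∈ Finset.range k, f (ζ ^ j * z)‖
        ≤ ((k : ℝ))⁻¹ * (k : ℝ) := by
          apply mul_le_mul_of_nonneg_left h1 (by positivity)
      _ = 1 := inv_mul_cancel₀ hkpos.ne'
  have hg : ∀ w : ℂ, ‖w‖ < 1 →
      HasSum (fun m : ℕ => a (k * m) * w ^ m) ((fun w => ∑' m : ℕ, a (k * m) * w ^ m) w)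
      ∧ ‖(fun w => ∑' m : ℕ, a (k * m) * w ^ m) w‖ ≤ 1 := by
    intro w hw
    obtain ⟨z, hzk⟩ := IsAlgClosed.exists_pow_nat_eq w (n := k) (by omega)
    have hz : ‖z‖ < 1 := by
      by_contra hz1
      push_neg at hz1
      have h1 : (1 : ℝ) ≤ ‖z‖ ^ k := one_le_pow₀ hz1
      rw [← hzk, norm_pow] at hw
      linarith
    have h := main z hz
    rw [hzk] at h
    have ht : (fun w => ∑' m : ℕ, a (k * m) * w ^ m) w
        = (k : ℂ)⁻¹ * ∑ j ∈ Finset.range k, f (ζ ^ j * z) := h.tsum_eq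
    rw [ht]
    exact ⟨h, hbnd z hz⟩
  have hkey := key_wiener (fun w => ∑' m : ℕ, a (k * m) * w ^ m) (fun m => a (k * m))
    (fun w hw => (hg w hw).1) (fun w hw => (hg w hw).2)
  simpa using hkey
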